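/- Let a > 0 and b = −a. Then there is a constant C = C(a) such that for all r, t > 0, ∫_{|t−r|}^{t+r} ⟨λ⟩^{−a} (r−t+λ)^{a−1} dλ ≤ C r^a ⟨t+r⟩^{−a} (1 + ln(⟨t+r⟩/⟨t−r⟩)), where ⟨λ⟩ = 1+|λ|. -/

import Mathlib

open MeasureTheory

section aux

lemma stmt11_aux_eval (c u v p : ℝ) (hp : -1 < p) (huv : u ≤ v) :
    ∫ x in Set.Ioc u v, (x - c) ^ p = ((v - c) ^ (p + 1) - (u - c) ^ (p + 1)) / (p + 1) := by
  rw [← intervalIntegral.integral_of_le huv,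
    intervalIntegral.integral_comp_sub_right (fun x => x ^ p) c]
  exact integral_rpow (Or.inl hp)

lemma stmt11_aux_intg (c u v p : ℝ) (hp : -1 < p) (huv : u ≤ v) :
    IntegrableOn (fun x => (x - c) ^ p) (Set.Ioc u v) := by
  have h := (intervalIntegral.intervalIntegrable_rpow'
    (a := u - c) (b := v - c) hp).comp_sub_right c
  rw [sub_add_cancel, sub_add_cancel] at h
  rw [intervalIntegrable_iff_integrableOn_Ioc_of_le huv] at h
  exact h.congr_fun (fun x _ => rfl) measurableSet_Ioc

lemma stmt11_aux_eval_inv (c u v : ℝ) (huv : u ≤ v) (hu : 0 < u - c) :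
    ∫ x in Set.Ioc u v, (x - c)⁻¹ = Real.log ((v - c) / (u - c)) := by
  rw [← intervalIntegral.integral_of_le huv,
    intervalIntegral.integral_comp_sub_right (fun x => x⁻¹) c]
  apply integral_inv
  rw [Set.mem_uIcc]
  push_neg
  constructor <;> intro h <;> linarith

lemma stmt11_aux_intg_inv (c u v : ℝ) (huv : u ≤ v) (hu : 0 < u - c) :
    IntegrableOn (fun x => (x - c)⁻¹) (Set.Ioc u v) := by
  apply (ContinuousOn.integrableOn_Icc ?_).mono_set Set.Ioc_subset_Icc_self
  apply ContinuousOn.inv₀ (by fun_prop)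
  intro x hx
  have := hx.1
  intro hzero
  have : x - c > 0 := by linarith
  linarith [sub_eq_zero.mp hzero, this]

lemma stmt11_bound2 (a x y : ℝ) (ha : 0 < a) (hy : 0 < y) (hxy : y ≤ 2 * (1 + x)) :
    (1 + x) ^ (-a) * y ^ (a - 1) ≤ 2 ^ a * y⁻¹ := by
  have hx : (0:ℝ) < 1 + x := by linarith
  have h1 : (1 + x) ^ (-a) ≤ (y / 2) ^ (-a) :=
    Real.rpow_le_rpow_of_nonpos (by positivity) (by linarith) (by linarith)
  have hyy : y ^ (-a) * y ^ (a - 1) = y⁻¹ := by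
    rw [← Real.rpow_add hy, show -a + (a - 1) = -1 by ring, Real.rpow_neg_one]
  calc (1 + x) ^ (-a) * y ^ (a - 1) ≤ (y / 2) ^ (-a) * y ^ (a - 1) :=
        mul_le_mul_of_nonneg_right h1 (Real.rpow_nonneg hy.le _)
    _ = (y ^ (-a) * 2 ^ a) * y ^ (a - 1) := by
        rw [Real.div_rpow hy.le (by norm_num), Real.rpow_neg (by norm_num : (0:ℝ) ≤ 2),
          div_eq_mul_inv, inv_inv]
    _ = 2 ^ a * (y ^ (-a) * y ^ (a - 1)) := by ring
    _ = 2 ^ a * y⁻¹ := by rw [hyy]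

end aux

/-- For a > 0, there is C with
∫_{|t−r|}^{t+r} ⟨λ⟩^{−a}(r−t+λ)^{a−1} dλ ≤ C r^a ⟨t+r⟩^{−a}(1+ln(⟨t+r⟩/⟨t−r⟩)). -/
theorem stmt_11 (a : ℝ) (ha : 0 < a) :
    ∃ C : ℝ, 0 < C ∧ ∀ r t : ℝ, 0 < r → 0 < t →
      (∫ lam in Set.Ioc |t - r| (t + r),
          (1 + |lam|) ^ (-a) * (r - t + lam) ^ (a - 1)) ≤
        C * r ^ a * (1 + |t + r|) ^ (-a) *
          (1 + Real.log ((1 + |t + r|) / (1 + |t - r|))) := by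
  have h2a : (0:ℝ) < 2 ^ a := Real.rpow_pos_of_pos two_pos a
  have h4a : (0:ℝ) < (4:ℝ) ^ a := Real.rpow_pos_of_pos (by norm_num) a
  have h2a1 : (0:ℝ) < (2:ℝ) ^ (a + 1) := Real.rpow_pos_of_pos two_pos _
  have hainv : (0:ℝ) < a⁻¹ := inv_pos.mpr ha
  refine ⟨4 ^ a * (a⁻¹ + 2 ^ (a + 1)), mul_pos h4a (by linarith), ?_⟩
  intro r t hr ht
  have habs : |t + r| = t + r := abs_of_pos (by linarith)
  rw [habs]
  set B := t + r with hB
  set A := |t - r| with hA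
  set c := t - r with hc
  have hA0 : 0 ≤ A := abs_nonneg _
  have hcA : c ≤ A := le_abs_self _
  have hcA' : -A ≤ c := neg_abs_le _
  have hAB : A ≤ B := abs_le.mpr ⟨by simp only [hB, hc]; linarith, by simp only [hB, hc]; linarith⟩
  have h1A : (0:ℝ) < 1 + A := by linarith
  have h1B : (0:ℝ) < 1 + B := by linarith
  have hBc : B - c = 2 * r := by rw [hB, hc]; ring
  set L := Real.log ((1 + B) / (1 + A)) with hL
  have hL0 : 0 ≤ L := Real.log_nonneg (by rw [le_div_iff₀ h1A]; linarith)
  have hIeq : (∫ lam in Set.Ioc A B, (1 + |lam|) ^ (-a) * (r - t + lam) ^ (a - 1))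
      = ∫ lam in Set.Ioc A B, (1 + lam) ^ (-a) * (lam - c) ^ (a - 1) := by
    apply setIntegral_congr_fun measurableSet_Ioc
    intro lam hlam
    have h1 : 0 ≤ lam := le_trans hA0 hlam.1.le
    have h2 : r - t + lam = lam - c := by rw [hc]; ring
    show (1 + |lam|) ^ (-a) * (r - t + lam) ^ (a - 1)
        = (1 + lam) ^ (-a) * (lam - c) ^ (a - 1)
    rw [abs_of_nonneg h1, h2]
  rw [hIeq]
  have hfae : 0 ≤ᵐ[volume.restrict (Set.Ioc A B)]
      fun lam => (1 + lam) ^ (-a) * (lam - c) ^ (a - 1) := by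
    filter_upwards [ae_restrict_mem measurableSet_Ioc] with lam hlam
    have h1 : (0:ℝ) ≤ 1 + lam := by linarith [hlam.1]
    have h2 : (0:ℝ) ≤ lam - c := by linarith [hlam.1]
    exact mul_nonneg (Real.rpow_nonneg h1 _) (Real.rpow_nonneg h2 _)
  have hra : (0:ℝ) < r ^ a := Real.rpow_pos_of_pos hr a
  have hBa : (0:ℝ) < (1 + B) ^ (-a) := Real.rpow_pos_of_pos h1B _
  rcases le_or_gt (4 * r) (1 + B) with hcase | hcase
  · -- small r case
    have key : ∀ lam ∈ Set.Ioc A B,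
        (1 + lam) ^ (-a) * (lam - c) ^ (a - 1) ≤ 2 ^ a * (1 + B) ^ (-a) * (lam - c) ^ (a - 1) := by
      intro lam hlam
      have h1 : (1 + B) / 2 ≤ 1 + lam := by
        have : A ≥ B - 2 * r := by simp only [hB, hc] at *; linarith [hcA]
        linarith [hlam.1]
      have h2 : (1 + lam) ^ (-a) ≤ ((1 + B) / 2) ^ (-a) :=
        Real.rpow_le_rpow_of_nonpos (by positivity) h1 (by linarith)
      have h3 : ((1 + B) / 2) ^ (-a) = 2 ^ a * (1 + B) ^ (-a) := by
        rw [Real.div_rpow h1B.le (by norm_num), Real.rpow_neg (by norm_num : (0:ℝ) ≤ 2),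
          div_eq_mul_inv, inv_inv, mul_comm]
      rw [← h3]
      exact mul_le_mul_of_nonneg_right h2 (Real.rpow_nonneg (by linarith [hlam.1]) _)
    have hgi : IntegrableOn (fun lam => 2 ^ a * (1 + B) ^ (-a) * (lam - c) ^ (a - 1))
        (Set.Ioc A B) :=
      (stmt11_aux_intg c A B (a - 1) (by linarith) hAB).const_mul _
    calc (∫ lam in Set.Ioc A B, (1 + lam) ^ (-a) * (lam - c) ^ (a - 1))
        ≤ (∫ lam in Set.Ioc A B, 2 ^ a * (1 + B) ^ (-a) * (lam - c) ^ (a - 1)) := by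
          refine integral_mono_of_nonneg hfae hgi ?_
          filter_upwards [ae_restrict_mem measurableSet_Ioc] with lam hlam using key lam hlam
      _ = 2 ^ a * (1 + B) ^ (-a) * ∫ lam in Set.Ioc A B, (lam - c) ^ (a - 1) :=
          integral_const_mul _ _
      _ = 2 ^ a * (1 + B) ^ (-a) * (((B - c) ^ a - (A - c) ^ a) / a) := by
          rw [stmt11_aux_eval c A B (a - 1) (by linarith) hAB, sub_add_cancel]
      _ ≤ 2 ^ a * (1 + B) ^ (-a) * ((2 * r) ^ a / a) := by
          have h4 : (0:ℝ) ≤ (A - c) ^ a := Real.rpow_nonneg (by linarith) _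
          have h5 : ((B - c) ^ a - (A - c) ^ a) / a ≤ (2 * r) ^ a / a := by
            rw [hBc]
            exact (div_le_div_iff_of_pos_right ha).mpr (by linarith)
          exact mul_le_mul_of_nonneg_left h5 (by positivity)
      _ = a⁻¹ * (4 ^ a * r ^ a * (1 + B) ^ (-a)) := by
          rw [Real.mul_rpow (by norm_num : (0:ℝ) ≤ 2) hr.le,
            show (4:ℝ) = 2 * 2 by norm_num,
            Real.mul_rpow (by norm_num : (0:ℝ) ≤ 2) (by norm_num : (0:ℝ) ≤ 2)]
          ring
      _ ≤ ((a⁻¹ + 2 ^ (a + 1)) * (1 + L)) * (4 ^ a * r ^ a * (1 + B) ^ (-a)) := by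
          apply mul_le_mul_of_nonneg_right ?_ (by positivity)
          nlinarith [mul_nonneg h2a1.le hL0]
      _ = 4 ^ a * (a⁻¹ + 2 ^ (a + 1)) * r ^ a * (1 + B) ^ (-a) * (1 + L) := by ring
  · -- large r case
    set b1 : ℝ → ℝ := fun lam => (1 + A) ^ (-a) * (lam - c) ^ (a - 1) with hb1def
    set b2 : ℝ → ℝ := fun lam => 2 ^ a * (lam - c)⁻¹ with hb2def
    set g : ℝ → ℝ := fun lam => min (b1 lam) (b2 lam) with hgdef
    set s : ℝ := max A (min B (1 + A + c)) with hsdef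
    have hsA : A ≤ s := le_max_left _ _
    have hsB : s ≤ B := max_le hAB (min_le_left _ _)
    have hsc : 0 < s - c := by
      have h1 : min B (1 + A + c) ≤ s := le_max_right _ _
      rcases le_total B (1 + A + c) with h | h
      · rw [min_eq_left h] at h1; rw [hBc] at *; linarith
      · rw [min_eq_right h] at h1; linarith
    -- pointwise bounds
    have hfb : ∀ lam ∈ Set.Ioc A B,
        (1 + lam) ^ (-a) * (lam - c) ^ (a - 1) ≤ g lam := by
      intro lam hlam
      have hmu : 0 < lam - c := by linarith [hlam.1]
      have h1lam : (0:ℝ) < 1 + lam := by linarith [hlam.1]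
      refine le_min ?_ ?_
      · exact mul_le_mul_of_nonneg_right
          (Real.rpow_le_rpow_of_nonpos h1A (by linarith [hlam.1]) (by linarith))
          (Real.rpow_nonneg hmu.le _)
      · exact stmt11_bound2 a lam (lam - c) ha hmu (by linarith [hlam.1])
    have hb1i : IntegrableOn b1 (Set.Ioc A B) :=
      (stmt11_aux_intg c A B (a - 1) (by linarith) hAB).const_mul _
    have hgm : AEStronglyMeasurable g (volume.restrict (Set.Ioc A B)) := by
      rw [hgdef, hb1def, hb2def]
      exact (Measurable.min (by fun_prop) (by fun_prop)).aestronglyMeasurable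
    have hgnn : ∀ lam ∈ Set.Ioc A B, 0 ≤ g lam := by
      intro lam hlam
      have hmu : 0 < lam - c := by linarith [hlam.1]
      refine le_min ?_ ?_
      · exact mul_nonneg (Real.rpow_nonneg h1A.le _) (Real.rpow_nonneg hmu.le _)
      · positivity
    have hgi : IntegrableOn g (Set.Ioc A B) := by
      refine Integrable.mono' hb1i hgm ?_
      filter_upwards [ae_restrict_mem measurableSet_Ioc] with lam hlam
      rw [Real.norm_eq_abs, abs_of_nonneg (hgnn lam hlam)]
      exact min_le_left _ _
    have hsplit : (∫ lam in Set.Ioc A B, g lam)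
        = (∫ lam in Set.Ioc A s, g lam) + ∫ lam in Set.Ioc s B, g lam := by
      rw [← setIntegral_union (Set.Ioc_disjoint_Ioc_of_le le_rfl) measurableSet_Ioc
        (hgi.mono_set (Set.Ioc_subset_Ioc_right hsB)) (hgi.mono_set (Set.Ioc_subset_Ioc_left hsA)),
        Set.Ioc_union_Ioc_eq_Ioc hsA hsB]
    have piece1 : (∫ lam in Set.Ioc A s, g lam) ≤ a⁻¹ := by
      have hm : (∫ lam in Set.Ioc A s, g lam) ≤ ∫ lam in Set.Ioc A s, b1 lam := by
        apply setIntegral_mono_on (hgi.mono_set (Set.Ioc_subset_Ioc_right hsB))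
          (hb1i.mono_set (Set.Ioc_subset_Ioc_right hsB)) measurableSet_Ioc
        intro x _
        exact min_le_left _ _
      have heval : (∫ lam in Set.Ioc A s, b1 lam)
          = (1 + A) ^ (-a) * (((s - c) ^ a - (A - c) ^ a) / a) := by
        rw [hb1def]
        rw [integral_const_mul, stmt11_aux_eval c A s (a - 1) (by linarith) hsA, sub_add_cancel]
      rw [heval] at hm
      refine le_trans hm ?_
      by_cases hAl : A ≤ 1 + A + c
      · have hs_le : s ≤ 1 + A + c := max_le hAl (min_le_right _ _)
        have h1 : (s - c) ^ a ≤ (1 + A) ^ a :=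
          Real.rpow_le_rpow (by linarith) (by linarith) ha.le
        have h2 : (0:ℝ) ≤ (A - c) ^ a := Real.rpow_nonneg (by linarith) _
        have h3 : (1 + A) ^ (-a) * ((1 + A) ^ a / a) = a⁻¹ := by
          rw [← mul_div_assoc, ← Real.rpow_add h1A]
          simp [div_eq_mul_inv]
        calc (1 + A) ^ (-a) * (((s - c) ^ a - (A - c) ^ a) / a)
            ≤ (1 + A) ^ (-a) * ((1 + A) ^ a / a) := by
              apply mul_le_mul_of_nonneg_left ?_ (Real.rpow_nonneg h1A.le _)
              exact (div_le_div_iff_of_pos_right ha).mpr (by linarith)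
          _ = a⁻¹ := h3
      · push_neg at hAl
        have hs_eq : s = A := by
          rw [hsdef]
          apply max_eq_left
          exact le_trans (min_le_right _ _) hAl.le
        rw [hs_eq, sub_self, zero_div, mul_zero]
        positivity
    have piece2 : (∫ lam in Set.Ioc s B, g lam) ≤ 2 ^ a * (Real.log 2 + L) := by
      have hb2i : IntegrableOn b2 (Set.Ioc s B) :=
        (stmt11_aux_intg_inv c s B hsB hsc).const_mul _
      have hm : (∫ lam in Set.Ioc s B, g lam) ≤ ∫ lam in Set.Ioc s B, b2 lam := by
        apply setIntegral_mono_on (hgi.mono_set (Set.Ioc_subset_Ioc_left hsA))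
          hb2i measurableSet_Ioc
        intro x _
        exact min_le_right _ _
      have heval : (∫ lam in Set.Ioc s B, b2 lam)
          = 2 ^ a * Real.log ((B - c) / (s - c)) := by
        rw [hb2def, integral_const_mul, stmt11_aux_eval_inv c s B hsB hsc]
      rw [heval] at hm
      refine le_trans hm ?_
      have hratio : (B - c) / (s - c) ≤ 2 * ((1 + B) / (1 + A)) := by
        rcases le_total (1 + A + c) B with h | h
        · have h1 : min B (1 + A + c) = 1 + A + c := min_eq_right h
          have h2 : 1 + A ≤ s - c := by
            have h2' : 1 + A + c ≤ s := by
              rw [hsdef, h1]; exact le_max_right _ _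
            linarith
          rw [show 2 * ((1 + B) / (1 + A)) = 2 * (1 + B) / (1 + A) by ring,
            div_le_div_iff₀ hsc h1A, hBc]
          have hrB : 2 * r ≤ 2 * (1 + B) := by rw [hB]; linarith
          linarith [mul_le_mul_of_nonneg_left h2 (show (0:ℝ) ≤ 2 * (1 + B) by linarith),
            mul_le_mul_of_nonneg_right hrB h1A.le]
        · have h1 : s = B := by
            rw [hsdef, min_eq_left h]
            exact max_eq_right hAB
          rw [h1, div_self (show B - c ≠ 0 by rw [hBc]; positivity)]
          rw [show 2 * ((1 + B) / (1 + A)) = 2 * (1 + B) / (1 + A) by ring,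
            le_div_iff₀ h1A]
          linarith
      have hlog : Real.log ((B - c) / (s - c)) ≤ Real.log 2 + L := by
        have h2 : Real.log ((B - c) / (s - c)) ≤ Real.log (2 * ((1 + B) / (1 + A))) := by
          apply Real.log_le_log (by rw [hBc]; positivity) hratio
        rwa [Real.log_mul (by norm_num) (by positivity), ← hL] at h2
      exact mul_le_mul_of_nonneg_left hlog h2a.le
    -- combine
    have hmain : (∫ lam in Set.Ioc A B, (1 + lam) ^ (-a) * (lam - c) ^ (a - 1))
        ≤ a⁻¹ + 2 ^ a * (Real.log 2 + L) := by
      calc (∫ lam in Set.Ioc A B, (1 + lam) ^ (-a) * (lam - c) ^ (a - 1))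
          ≤ (∫ lam in Set.Ioc A B, g lam) := by
            refine integral_mono_of_nonneg hfae hgi ?_
            filter_upwards [ae_restrict_mem measurableSet_Ioc] with lam hlam using hfb lam hlam
        _ = (∫ lam in Set.Ioc A s, g lam) + (∫ lam in Set.Ioc s B, g lam) := hsplit
        _ ≤ a⁻¹ + 2 ^ a * (Real.log 2 + L) := add_le_add piece1 piece2
    refine le_trans hmain ?_
    have hge : (4:ℝ) ^ (-a) ≤ r ^ a * (1 + B) ^ (-a) := by
      have h1 : (4 * r) ^ (-a) ≤ (1 + B) ^ (-a) :=
        Real.rpow_le_rpow_of_nonpos h1B hcase.le (by linarith)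
      have h2 : (4 * r) ^ (-a) = 4 ^ (-a) * r ^ (-a) :=
        Real.mul_rpow (by norm_num) hr.le
      have h3 : r ^ a * r ^ (-a) = 1 := by
        rw [← Real.rpow_add hr]; simp
      calc (4:ℝ) ^ (-a) = r ^ a * (4 ^ (-a) * r ^ (-a)) := by
            rw [show r ^ a * (4 ^ (-a) * r ^ (-a)) = 4 ^ (-a) * (r ^ a * r ^ (-a)) by ring, h3,
              mul_one]
        _ = r ^ a * (4 * r) ^ (-a) := by rw [h2]
        _ ≤ r ^ a * (1 + B) ^ (-a) := mul_le_mul_of_nonneg_left h1 hra.le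
    have h44 : (4:ℝ) ^ a * 4 ^ (-a) = 1 := by
      rw [← Real.rpow_add (by norm_num : (0:ℝ) < 4)]; simp
    have hnum : a⁻¹ + 2 ^ a * (Real.log 2 + L) ≤ (a⁻¹ + 2 ^ (a + 1)) * (1 + L) := by
      have hlog2 : Real.log 2 ≤ 1 := by
        have := Real.log_two_lt_d9
        linarith
      have h2a1eq : (2:ℝ) ^ (a + 1) = 2 * 2 ^ a := by
        rw [Real.rpow_add two_pos, Real.rpow_one]; ring
      nlinarith [mul_nonneg h2a.le hL0, mul_nonneg hainv.le hL0,
        mul_nonneg h2a.le (sub_nonneg.mpr hlog2)]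
    calc a⁻¹ + 2 ^ a * (Real.log 2 + L) ≤ (a⁻¹ + 2 ^ (a + 1)) * (1 + L) := hnum
      _ = (4 ^ a * 4 ^ (-a)) * ((a⁻¹ + 2 ^ (a + 1)) * (1 + L)) := by rw [h44]; ring
      _ = (4 ^ a * (a⁻¹ + 2 ^ (a + 1))) * (4 ^ (-a)) * (1 + L) := by ring
      _ ≤ (4 ^ a * (a⁻¹ + 2 ^ (a + 1))) * (r ^ a * (1 + B) ^ (-a)) * (1 + L) := by
          apply mul_le_mul_of_nonneg_right ?_ (by linarith)
          apply mul_le_mul_of_nonneg_left hge (by positivity)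
      _ = 4 ^ a * (a⁻¹ + 2 ^ (a + 1)) * r ^ a * (1 + B) ^ (-a) * (1 + L) := by ring
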